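/- arXiv:1309.3866 — 3 statements merged into one kernel-verified Lean document; each statement's English description precedes it below -/
import Mathlib

section
/- If the norm of a Banach space X is octahedral, then every convex combination of weak-star slices of the closed unit ball of X* has diameter 2. -/
open scoped BigOperators
open Metric

noncomputable section

/-- The norm of `X` is octahedral. -/
def IsOctahedral (X : Type*) [NormedAddCommGroup X] [NormedSpace ℝ X] : Prop :=
  ∀ ε : ℝ, 0 < ε → ∀ Y : Subspace ℝ X, FiniteDimensional ℝ Y →
    ∃ x : X, ‖x‖ = 1 ∧ ∀ y ∈ Y, ∀ l : ℝ, (1 - ε) * (‖y‖ + |l|) ≤ ‖y + l • x‖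

/-- The weak-star slice of the dual unit ball determined by `x` and `α`. -/
def wSlice {X : Type*} [NormedAddCommGroup X] [NormedSpace ℝ X] (x : X) (α : ℝ) :
    Set (StrongDual ℝ X) :=
  {f | ‖f‖ ≤ 1 ∧ 1 - α < f x}

/-- The convex combination `∑ lam i • S i` of sets. -/
def ccomb {E : Type*} [AddCommMonoid E] [Module ℝ E] {n : ℕ}
    (lam : Fin n → ℝ) (S : Fin n → Set E) : Set E :=
  {y | ∃ f : Fin n → E, (∀ i, f i ∈ S i) ∧ y = ∑ i, lam i • f i}

theorem octahedral_implies_ccomb_wSlices_diam_two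
    (X : Type*) [NormedAddCommGroup X] [NormedSpace ℝ X] [CompleteSpace X]
    (hoct : IsOctahedral X)
    (n : ℕ) (lam : Fin n → ℝ) (hlam : ∀ i, 0 < lam i) (hsum : ∑ i, lam i = 1)
    (x : Fin n → X) (hx : ∀ i, ‖x i‖ = 1)
    (α : Fin n → ℝ) (hα : ∀ i, α i ∈ Set.Ioo (0 : ℝ) 1) :
    Metric.diam (ccomb lam (fun i => wSlice (x i) (α i))) = 2 := by
  have hn : n ≠ 0 := by
    rintro rfl; simp at hsum
  have hNE : Nonempty (Fin n) := ⟨⟨0, Nat.pos_of_ne_zero hn⟩⟩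
  set s := ccomb lam (fun i => wSlice (x i) (α i)) with hs
  -- upper bound on norms of elements
  have hub : ∀ y ∈ s, ‖y‖ ≤ 1 := by
    rintro y ⟨F, hF, rfl⟩
    calc ‖∑ i, lam i • F i‖ ≤ ∑ i, ‖lam i • F i‖ := norm_sum_le _ _
      _ ≤ ∑ i, lam i := by
          apply Finset.sum_le_sum
          intro i _
          rw [norm_smul, Real.norm_eq_abs, abs_of_pos (hlam i)]
          calc lam i * ‖F i‖ ≤ lam i * 1 :=
                mul_le_mul_of_nonneg_left (hF i).1 (hlam i).le
            _ = lam i := mul_one _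
      _ = 1 := hsum
  have hle : Metric.diam s ≤ 2 := by
    apply Metric.diam_le_of_forall_dist_le (by norm_num)
    intro a ha b hb
    calc dist a b ≤ ‖a‖ + ‖b‖ := dist_le_norm_add_norm a b
      _ ≤ 1 + 1 := add_le_add (hub a ha) (hub b hb)
      _ = 2 := by norm_num
  have hbdd : Bornology.IsBounded s := by
    refine (Metric.isBounded_closedBall (x := (0 : StrongDual ℝ X)) (r := 1)).subset ?_
    intro y hy
    simpa [Metric.mem_closedBall, dist_zero_right] using hub y hy
  refine le_antisymm hle ?_
  apply le_of_forall_pos_le_add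
  intro ε hε
  -- choose δ
  set m : ℝ := Finset.univ.inf' Finset.univ_nonempty α with hm
  have hm0 : 0 < m := by
    rw [hm, Finset.lt_inf'_iff]
    intro i _; exact (hα i).1
  have hmle : ∀ i, m ≤ α i := fun i =>
    Finset.inf'_le _ (Finset.mem_univ i)
  set δ : ℝ := min (ε / 4) (m / 4) with hδdef
  have hδ0 : 0 < δ := lt_min (by linarith) (by linarith)
  have hδε : δ ≤ ε / 4 := min_le_left _ _
  have hδm : ∀ i, 2 * δ < α i := by
    intro i
    have h1 : δ ≤ m / 4 := min_le_right _ _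
    have := hmle i
    linarith
  have hδ1 : δ < 1 := by
    have h1 : δ ≤ m / 4 := min_le_right _ _
    have : m ≤ α ⟨0, Nat.pos_of_ne_zero hn⟩ := hmle _
    have := (hα ⟨0, Nat.pos_of_ne_zero hn⟩).2
    linarith
  -- octahedrality
  have hfd : FiniteDimensional ℝ (Submodule.span ℝ (Set.range x)) :=
    FiniteDimensional.span_of_finite ℝ (Set.finite_range x)
  obtain ⟨z, hz1, hzkey⟩ := hoct δ hδ0 (Submodule.span ℝ (Set.range x)) hfd
  have hxmem : ∀ i, x i ∈ Submodule.span ℝ (Set.range x) := fun i =>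
    Submodule.subset_span (Set.mem_range_self i)
  have hplus : ∀ i, 2 * (1 - δ) ≤ ‖x i + z‖ := by
    intro i
    have h := hzkey (x i) (hxmem i) 1
    rw [hx i, one_smul, abs_one] at h
    linarith
  have hminus : ∀ i, 2 * (1 - δ) ≤ ‖x i - z‖ := by
    intro i
    have h := hzkey (x i) (hxmem i) (-1)
    rw [hx i] at h
    have : x i + (-1 : ℝ) • z = x i - z := by
      simp [sub_eq_add_neg]
    rw [this] at h
    simp only [abs_neg, abs_one] at h
    linarith
  have hplusne : ∀ i, x i + z ≠ 0 := by
    intro i h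
    have := hplus i
    rw [h, norm_zero] at this
    linarith
  have hminusne : ∀ i, x i - z ≠ 0 := by
    intro i h
    have := hminus i
    rw [h, norm_zero] at this
    linarith
  choose F hF1 hFx using fun i => exists_dual_vector ℝ (x i + z) (norm_ne_zero_iff.mpr (hplusne i))
  choose G hG1 hGx using fun i => exists_dual_vector ℝ (x i - z) (norm_ne_zero_iff.mpr (hminusne i))
  -- basic bounds on functional values
  have hFxz : ∀ i, F i (x i + z) = ‖x i + z‖ := by
    intro i; simpa using hFx i
  have hGxz : ∀ i, G i (x i - z) = ‖x i - z‖ := by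
    intro i; simpa using hGx i
  have habs : ∀ (f : StrongDual ℝ X), ‖f‖ = 1 → ∀ y : X, ‖y‖ ≤ 1 → |f y| ≤ 1 := by
    intro f hf y hy
    have := f.le_opNorm y
    rw [hf, one_mul] at this
    calc |f y| = ‖f y‖ := (Real.norm_eq_abs _).symm
      _ ≤ ‖y‖ := this
      _ ≤ 1 := hy
  have hFz : ∀ i, 1 - 2 * δ ≤ F i z := by
    intro i
    have h1 : F i z = F i (x i + z) - F i (x i) := by
      rw [map_add]; ring
    have h2 : |F i (x i)| ≤ 1 := habs _ (hF1 i) _ (le_of_eq (hx i))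
    have h3 := hplus i
    rw [h1, hFxz i]
    have := abs_le.mp h2
    linarith [this.2]
  have hGz : ∀ i, G i z ≤ -(1 - 2 * δ) := by
    intro i
    have h1 : G i z = G i (x i) - G i (x i - z) := by
      rw [map_sub]; ring
    have h2 : |G i (x i)| ≤ 1 := habs _ (hG1 i) _ (le_of_eq (hx i))
    have h3 := hminus i
    rw [h1, hGxz i]
    have := abs_le.mp h2
    linarith [this.2]
  have hFmem : ∀ i, F i ∈ wSlice (x i) (α i) := by
    intro i
    refine ⟨le_of_eq (hF1 i), ?_⟩
    have h1 : F i (x i) = F i (x i + z) - F i z := by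
      rw [map_add]; ring
    have h2 : |F i z| ≤ 1 := habs _ (hF1 i) _ (le_of_eq hz1)
    have h3 := hplus i
    rw [h1, hFxz i]
    have := abs_le.mp h2
    have := hδm i
    linarith
  have hGmem : ∀ i, G i ∈ wSlice (x i) (α i) := by
    intro i
    refine ⟨le_of_eq (hG1 i), ?_⟩
    have h1 : G i (x i) = G i (x i - z) + G i z := by
      rw [map_sub]; ring
    have h2 : |G i z| ≤ 1 := habs _ (hG1 i) _ (le_of_eq hz1)
    have h3 := hminus i
    rw [h1, hGxz i]
    have := abs_le.mp h2
    have := hδm i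
    linarith
  set a : StrongDual ℝ X := ∑ i, lam i • F i with ha
  set b : StrongDual ℝ X := ∑ i, lam i • G i with hb
  have haS : a ∈ s := ⟨F, hFmem, rfl⟩
  have hbS : b ∈ s := ⟨G, hGmem, rfl⟩
  have hval : (2 : ℝ) - 4 * δ ≤ (a - b) z := by
    have : (a - b) z = ∑ i, lam i * (F i z - G i z) := by
      simp [ha, hb, ContinuousLinearMap.sub_apply, ContinuousLinearMap.sum_apply,
        ContinuousLinearMap.smul_apply, ← Finset.sum_sub_distrib, mul_sub, smul_eq_mul]
    rw [this]
    calc (2 : ℝ) - 4 * δ = ∑ i, lam i * (2 - 4 * δ) := by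
          rw [← Finset.sum_mul, hsum, one_mul]
      _ ≤ ∑ i, lam i * (F i z - G i z) := by
          apply Finset.sum_le_sum
          intro i _
          apply mul_le_mul_of_nonneg_left _ (hlam i).le
          have := hFz i
          have := hGz i
          linarith
  have hnorm : (2 : ℝ) - 4 * δ ≤ ‖a - b‖ := by
    calc (2 : ℝ) - 4 * δ ≤ (a - b) z := hval
      _ ≤ |(a - b) z| := le_abs_self _
      _ = ‖(a - b) z‖ := (Real.norm_eq_abs _).symm
      _ ≤ ‖a - b‖ * ‖z‖ := (a - b).le_opNorm z
      _ = ‖a - b‖ := by rw [hz1, mul_one]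
  have hdist : (2 : ℝ) - ε ≤ dist a b := by
    rw [dist_eq_norm]
    linarith
  have := Metric.dist_le_diam_of_mem hbdd haS hbS
  linarith
end
end

section
/- For a Banach space X, every convex combination of slices of the unit ball B_X has diameter 2 if and only if every convex combination of weak-star slices of B_{X**} has diameter 2. -/
open scoped BigOperators
open Metric

noncomputable section

/-- The slice of the unit ball of `X` determined by `f ∈ S_{X*}` and `α`. -/
def ballSlice {X : Type*} [NormedAddCommGroup X] [NormedSpace ℝ X]
    (f : StrongDual ℝ X) (α : ℝ) : Set X :=
  {x | ‖x‖ ≤ 1 ∧ 1 - α < f x}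

/-- The weak-star slice of the bidual unit ball determined by `f ∈ S_{X*}` and `α`. -/
def biSlice {X : Type*} [NormedAddCommGroup X] [NormedSpace ℝ X]
    (f : StrongDual ℝ X) (α : ℝ) :
    Set (StrongDual ℝ (StrongDual ℝ X)) :=
  {F | ‖F‖ ≤ 1 ∧ 1 - α < F f}

lemma convex_norm_sum_le {E : Type*} [NormedAddCommGroup E] [NormedSpace ℝ E] {n : ℕ}
    {lam : Fin n → ℝ} (hl : ∀ i, 0 ≤ lam i) (hs : ∑ i, lam i = 1)
    (u : Fin n → E) (hu : ∀ i, ‖u i‖ ≤ 1) : ‖∑ i, lam i • u i‖ ≤ 1 := by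
  calc ‖∑ i, lam i • u i‖ ≤ ∑ i, ‖lam i • u i‖ := norm_sum_le _ _
    _ ≤ ∑ i, lam i := by
        refine Finset.sum_le_sum fun i _ => ?_
        rw [norm_smul, Real.norm_eq_abs, abs_of_nonneg (hl i)]
        nlinarith [hu i, hl i]
    _ = 1 := hs

lemma ballcomb_subset {X : Type*} [NormedAddCommGroup X] [NormedSpace ℝ X]
    {n : ℕ} {lam : Fin n → ℝ} (hl : ∀ i, 0 ≤ lam i) (hs : ∑ i, lam i = 1)
    (f : Fin n → StrongDual ℝ X) (α : Fin n → ℝ) :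
    ccomb lam (fun i => ballSlice (f i) (α i)) ⊆ Metric.closedBall (0 : X) 1 := by
  rintro y ⟨v, hv, rfl⟩
  rw [Metric.mem_closedBall, dist_zero_right]
  exact convex_norm_sum_le hl hs v (fun i => (hv i).1)

lemma ballcomb_diam_le {X : Type*} [NormedAddCommGroup X] [NormedSpace ℝ X]
    {n : ℕ} {lam : Fin n → ℝ} (hl : ∀ i, 0 ≤ lam i) (hs : ∑ i, lam i = 1)
    (f : Fin n → StrongDual ℝ X) (α : Fin n → ℝ) :
    Metric.diam (ccomb lam (fun i => ballSlice (f i) (α i))) ≤ 2 := by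
  have h1 := Metric.diam_mono (ballcomb_subset hl hs f α)
    (Metric.isBounded_closedBall (x := (0:X)) (r := 1))
  have h2 := Metric.diam_closedBall (x := (0:X)) (r := 1) zero_le_one
  linarith

lemma bicomb_diam_le (X : Type*) [NormedAddCommGroup X] [NormedSpace ℝ X]
    {n : ℕ} {lam : Fin n → ℝ} (hl : ∀ i, 0 ≤ lam i) (hs : ∑ i, lam i = 1)
    (f : Fin n → StrongDual ℝ X) (α : Fin n → ℝ) :
    Metric.diam (ccomb lam (fun i => biSlice (f i) (α i))) ≤ 2 := by
  refine Metric.diam_le_of_forall_dist_le (by norm_num) ?_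
  rintro y ⟨v, hv, rfl⟩ z ⟨w, hw, rfl⟩
  rw [show dist (∑ i, lam i • v i) (∑ i, lam i • w i) = ‖(∑ i, lam i • v i) - ∑ i, lam i • w i‖
    from dist_eq_norm (∑ i, lam i • v i) (∑ i, lam i • w i)]
  have h1 := convex_norm_sum_le hl hs v (fun i => (hv i).1)
  have h2 := convex_norm_sum_le hl hs w (fun i => (hw i).1)
  calc ‖(∑ i, lam i • v i) - ∑ i, lam i • w i‖
      ≤ ‖∑ i, lam i • v i‖ + ‖∑ i, lam i • w i‖ := norm_sub_le (∑ i, lam i • v i) (∑ i, lam i • w i)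
    _ ≤ 2 := by linarith

lemma arith_aux (α η s δ N a b : ℝ) (hα : 0 < α) (hs0 : 0 < s) (hs1 : s ≤ 1/2)
    (hδ0 : 0 < δ) (h1 : 2*δ ≤ s*α/2) (h2 : 4*δ + s*α ≤ η)
    (hnh : s*(1-α/2)+(1-s)*(1-δ) < N) (hxh : N - δ < s*a+(1-s)*b)
    (ha : a ≤ 1) (hb : b ≤ 1) : 1-α < a ∧ 1-η < b := by
  have hη0 : 0 ≤ η := by nlinarith [mul_nonneg hs0.le hα.le]
  have hsη : s * η ≤ 1/2 * η := mul_le_mul_of_nonneg_right hs1 hη0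
  constructor
  · have key1 : s * (1-α) < s * a := by
      nlinarith [mul_le_mul_of_nonneg_left hb (show (0:ℝ) ≤ 1-s by linarith),
        mul_nonneg hs0.le hδ0.le]
    exact (mul_lt_mul_iff_right₀ hs0).mp key1
  · have key2 : (1-s) * (1-η) < (1-s) * b := by
      nlinarith [mul_le_mul_of_nonneg_left ha hs0.le, mul_nonneg hs0.le hδ0.le, hsη]
    exact (mul_lt_mul_iff_right₀ (by linarith : (0:ℝ) < 1-s)).mp key2

/-- Key approximation lemma: a point of the unit ball of `X` nearly norming a
suitable convex combination of `f` and `g` lies deep in the slice of `f` and has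
large `g`-value. -/
lemma key_lemma {X : Type*} [NormedAddCommGroup X] [NormedSpace ℝ X]
    (f g : StrongDual ℝ X) (hf : ‖f‖ ≤ 1) (hg : ‖g‖ ≤ 1)
    (F : StrongDual ℝ (StrongDual ℝ X)) (hF : ‖F‖ ≤ 1)
    {α η s δ : ℝ} (hα : 0 < α) (hs0 : 0 < s) (hs1 : s ≤ 1/2) (hδ0 : 0 < δ)
    (h1 : 2*δ ≤ s*α/2) (h2 : 4*δ + s*α ≤ η)
    (hFf : 1 - α/2 < F f) (hFg : 1 - δ < F g) :
    ∃ x : X, ‖x‖ ≤ 1 ∧ 1 - α < f x ∧ 1 - η < g x := by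
  set h : StrongDual ℝ X := s • f + (1-s) • g with hh
  have hFh : F h = s * F f + (1-s) * F g := by
    simp [hh, map_add, map_smul, smul_eq_mul]
  have hFh_le : F h ≤ ‖h‖ := by
    calc F h ≤ |F h| := le_abs_self _
      _ = ‖F h‖ := (Real.norm_eq_abs _).symm
      _ ≤ ‖F‖ * ‖h‖ := F.le_opNorm h
      _ ≤ 1 * ‖h‖ := by nlinarith [norm_nonneg h]
      _ = ‖h‖ := one_mul _
  have hnh : s * (1 - α/2) + (1-s) * (1-δ) < ‖h‖ := by
    have : s * (1 - α/2) + (1-s) * (1-δ) < F h := by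
      rw [hFh]; nlinarith
    linarith
  obtain ⟨x₀, hx₀, hx₀2⟩ := h.exists_lt_apply_of_lt_opNorm (r := ‖h‖ - δ) (by linarith)
  rw [Real.norm_eq_abs] at hx₀2
  obtain ⟨x, hx, hxh⟩ : ∃ x : X, ‖x‖ ≤ 1 ∧ ‖h‖ - δ < h x := by
    rcases abs_cases (h x₀) with ⟨he, _⟩ | ⟨he, _⟩
    · exact ⟨x₀, hx₀.le, by linarith⟩
    · exact ⟨-x₀, by simpa using hx₀.le, by rw [map_neg]; linarith⟩
  have hhx : h x = s * f x + (1-s) * g x := by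
    simp [hh, smul_eq_mul]
  have bound : ∀ p : StrongDual ℝ X, ‖p‖ ≤ 1 → p x ≤ 1 := by
    intro p hp
    calc p x ≤ |p x| := le_abs_self _
      _ = ‖p x‖ := (Real.norm_eq_abs _).symm
      _ ≤ ‖p‖ * ‖x‖ := p.le_opNorm x
      _ ≤ 1 := mul_le_one₀ hp (norm_nonneg x) hx
  have hfx1 : f x ≤ 1 := bound f hf
  have hgx1 : g x ≤ 1 := bound g hg
  rw [hhx] at hxh
  obtain ⟨r1, r2⟩ := arith_aux α η s δ ‖h‖ (f x) (g x) hα hs0 hs1 hδ0 h1 h2 hnh hxh hfx1 hgx1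
  exact ⟨x, hx, r1, r2⟩

theorem ccomb_slices_diam_two_iff_ccomb_wStarSlices_bidual_diam_two
    (X : Type*) [NormedAddCommGroup X] [NormedSpace ℝ X] [CompleteSpace X] :
    (∀ (n : ℕ) (lam : Fin n → ℝ), (∀ i, 0 < lam i) → ∑ i, lam i = 1 →
      ∀ (f : Fin n → StrongDual ℝ X), (∀ i, ‖f i‖ = 1) →
      ∀ (α : Fin n → ℝ), (∀ i, α i ∈ Set.Ioo (0 : ℝ) 1) →
      Metric.diam (ccomb lam (fun i => ballSlice (f i) (α i))) = 2) ↔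
    (∀ (n : ℕ) (lam : Fin n → ℝ), (∀ i, 0 < lam i) → ∑ i, lam i = 1 →
      ∀ (f : Fin n → StrongDual ℝ X), (∀ i, ‖f i‖ = 1) →
      ∀ (α : Fin n → ℝ), (∀ i, α i ∈ Set.Ioo (0 : ℝ) 1) →
      Metric.diam (ccomb lam (fun i => biSlice (f i) (α i))) = 2) := by
  constructor
  · -- forward: use the canonical embedding
    intro h n lam hlam hsum f hf α hα
    have hd := h n lam hlam hsum f hf α hα
    refine le_antisymm (bicomb_diam_le X (fun i => (hlam i).le) hsum f α) ?_
    have himg : (NormedSpace.inclusionInDoubleDualLi ℝ (E := X)) ''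
        (ccomb lam (fun i => ballSlice (f i) (α i))) ⊆
        ccomb lam (fun i => biSlice (f i) (α i)) := by
      rintro _ ⟨z, ⟨v, hv, rfl⟩, rfl⟩
      refine ⟨fun i => NormedSpace.inclusionInDoubleDualLi ℝ (v i), fun i => ⟨?_, ?_⟩, ?_⟩
      · rw [LinearIsometry.norm_map]; exact (hv i).1
      · exact (hv i).2
      · exact (map_sum (NormedSpace.inclusionInDoubleDualLi ℝ (E := X)).toLinearMap _ _).trans (by simp)
    have hbd : Bornology.IsBounded (ccomb lam (fun i => biSlice (f i) (α i))) := by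
      refine Metric.isBounded_closedBall (x := 0) (r := 1) |>.subset ?_
      rintro y ⟨v, hv, rfl⟩
      rw [Metric.mem_closedBall, show dist (∑ i, lam i • v i) 0 = ‖∑ i, lam i • v i‖
        from dist_zero_right (∑ i, lam i • v i)]
      exact convex_norm_sum_le (fun i => (hlam i).le) hsum v (fun i => (hv i).1)
    calc (2:ℝ) = Metric.diam (ccomb lam (fun i => ballSlice (f i) (α i))) := hd.symm
      _ = Metric.diam ((NormedSpace.inclusionInDoubleDualLi ℝ (E := X)) ''
            (ccomb lam (fun i => ballSlice (f i) (α i)))) :=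
          ((NormedSpace.inclusionInDoubleDualLi ℝ (E := X)).isometry.diam_image _).symm
      _ ≤ Metric.diam (ccomb lam (fun i => biSlice (f i) (α i))) :=
          Metric.diam_mono himg hbd
  · -- backward
    intro h n lam hlam hsum f hf α hα
    have hn : n ≠ 0 := by rintro rfl; simp at hsum
    haveI : Nonempty (Fin n) := Fin.pos_iff_nonempty.mp (Nat.pos_of_ne_zero hn)
    have hlam1 : ∀ i, lam i ≤ 1 := by
      intro i
      calc lam i ≤ ∑ j, lam j :=
            Finset.single_le_sum (fun j _ => (hlam j).le) (Finset.mem_univ i)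
        _ = 1 := hsum
    refine le_antisymm (ballcomb_diam_le (fun i => (hlam i).le) hsum f α) ?_
    refine le_of_forall_pos_le_add ?_
    intro ε hε
    set η : ℝ := min (ε/2) (1/2) with hηdef
    have hη0 : 0 < η := lt_min (by linarith) (by norm_num)
    have hη2 : η ≤ 1/2 := min_le_right _ _
    have hηε : η ≤ ε/2 := min_le_left _ _
    set s : Fin n → ℝ := fun i => min (1/2) (η/(2*α i)) with hsdef
    have hs0 : ∀ i, 0 < s i := fun i => lt_min (by norm_num)
      (div_pos hη0 (by nlinarith [(hα i).1]))
    have hs1 : ∀ i, s i ≤ 1/2 := fun i => min_le_left _ _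
    have hsα : ∀ i, s i * α i ≤ η/2 := by
      intro i
      have ha1 : s i ≤ η/(2*α i) := min_le_right _ _
      have ha2 : (0:ℝ) < α i := (hα i).1
      calc s i * α i ≤ (η/(2*α i)) * α i := mul_le_mul_of_nonneg_right ha1 ha2.le
        _ = η/2 := by field_simp
    set δ : Fin n → ℝ := fun i => min (η/18) (s i * α i/4) with hδdef
    have hδ0 : ∀ i, 0 < δ i := fun i => lt_min (by linarith)
      (by nlinarith [hs0 i, (hα i).1])
    have h1 : ∀ i, 2*δ i ≤ s i*α i/2 := by
      intro i
      have := min_le_right (η/18) (s i * α i/4)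
      simp only [hδdef]
      linarith [min_le_right (η/18) (s i * α i/4)]
    have h2 : ∀ i, 4*δ i + s i*α i ≤ η := by
      intro i
      have hb := hsα i
      simp only [hδdef]
      linarith [min_le_left (η/18) (s i * α i/4)]
    set ε₀ : ℝ := Finset.univ.inf' Finset.univ_nonempty (fun i => lam i * δ i) with hε₀def
    have hε₀pos : 0 < ε₀ := by
      rw [hε₀def, Finset.lt_inf'_iff]
      exact fun i _ => mul_pos (hlam i) (hδ0 i)
    have hε₀le : ∀ i, ε₀ ≤ lam i * δ i := fun i => Finset.inf'_le _ (Finset.mem_univ i)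
    have hε₀2 : ε₀ < 2 := by
      obtain ⟨i⟩ := (inferInstance : Nonempty (Fin n))
      have h3 := hε₀le i
      have h4 : lam i * δ i ≤ δ i := by nlinarith [hδ0 i, hlam1 i, hlam i]
      have h5 : δ i ≤ η/18 := min_le_left _ _
      linarith
    have hα' : ∀ i, α i / 2 ∈ Set.Ioo (0:ℝ) 1 :=
      fun i => ⟨by linarith [(hα i).1], by linarith [(hα i).2]⟩
    have hbid := h n lam hlam hsum f hf (fun i => α i / 2) hα'
    obtain ⟨F, hFT, G, hGT, hFG⟩ : ∃ F ∈ ccomb lam (fun i => biSlice (f i) (α i / 2)),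
        ∃ G ∈ ccomb lam (fun i => biSlice (f i) (α i / 2)), 2 - ε₀ < dist F G := by
      by_contra hcon
      push_neg at hcon
      have := Metric.diam_le_of_forall_dist_le (by linarith) hcon
      rw [hbid] at this; linarith
    rcases hFT with ⟨Fv, hFv, hFeq⟩
    rcases hGT with ⟨Gv, hGv, hGeq⟩
    rw [show dist F G = ‖F - G‖ from dist_eq_norm F G] at hFG
    obtain ⟨g0, hg0, hg02⟩ := (F - G).exists_lt_apply_of_lt_opNorm hFG
    rw [Real.norm_eq_abs, ContinuousLinearMap.sub_apply] at hg02
    obtain ⟨g, hg, hgap⟩ : ∃ g : StrongDual ℝ X, ‖g‖ ≤ 1 ∧ 2 - ε₀ < F g - G g := by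
      rcases abs_cases (F g0 - G g0) with ⟨he, _⟩ | ⟨he, _⟩
      · exact ⟨g0, hg0.le, by linarith⟩
      · refine ⟨-g0, by rw [norm_neg]; exact hg0.le, by rw [map_neg, map_neg]; linarith⟩
    have happ : ∀ (H : StrongDual ℝ (StrongDual ℝ X)), ‖H‖ ≤ 1 → |H g| ≤ 1 := by
      intro H hH
      rw [← Real.norm_eq_abs]
      calc ‖H g‖ ≤ ‖H‖ * ‖g‖ := H.le_opNorm g
        _ ≤ 1 := mul_le_one₀ hH (norm_nonneg g) hg
    have hFgsum : F g = ∑ i, lam i * Fv i g := by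
      rw [hFeq]
      simp [ContinuousLinearMap.sum_apply, ContinuousLinearMap.smul_apply, smul_eq_mul]
    have hGgsum : G g = ∑ i, lam i * Gv i g := by
      rw [hGeq]
      simp [ContinuousLinearMap.sum_apply, ContinuousLinearMap.smul_apply, smul_eq_mul]
    have hci : ∀ j, 2 - ε₀/lam j < Fv j g - Gv j g := by
      intro j
      have htot : 2 - ε₀ < ∑ i, lam i * (Fv i g - Gv i g) := by
        have e0 : ∑ i, lam i * (Fv i g - Gv i g) = F g - G g := by
          rw [hFgsum, hGgsum, ← Finset.sum_sub_distrib]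
          exact Finset.sum_congr rfl (fun i _ => by ring)
        rw [e0]; exact hgap
      have hc2 : ∀ i, Fv i g - Gv i g ≤ 2 := by
        intro i
        have hA := abs_le.mp (happ _ (hFv i).1)
        have hB := abs_le.mp (happ _ (hGv i).1)
        linarith
      have e1 : lam j + ∑ i ∈ Finset.univ.erase j, lam i = 1 := by
        rw [Finset.add_sum_erase _ lam (Finset.mem_univ j)]; exact hsum
      have herase : ∑ i ∈ Finset.univ.erase j, lam i * (Fv i g - Gv i g)
          ≤ 2 * (1 - lam j) := by
        calc ∑ i ∈ Finset.univ.erase j, lam i * (Fv i g - Gv i g)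
            ≤ ∑ i ∈ Finset.univ.erase j, lam i * 2 :=
              Finset.sum_le_sum (fun i _ => mul_le_mul_of_nonneg_left (hc2 i) (hlam i).le)
          _ = 2 * ∑ i ∈ Finset.univ.erase j, lam i := by rw [← Finset.sum_mul]; ring
          _ = 2 * (1 - lam j) := by
              rw [show ∑ i ∈ Finset.univ.erase j, lam i = 1 - lam j by linarith]
      have hjrec : lam j * (Fv j g - Gv j g)
          = (∑ i, lam i * (Fv i g - Gv i g))
            - ∑ i ∈ Finset.univ.erase j, lam i * (Fv i g - Gv i g) := by
        rw [← Finset.add_sum_erase _ (fun i => lam i * (Fv i g - Gv i g)) (Finset.mem_univ j)]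
        ring
      have hlow : 2*lam j - ε₀ < lam j * (Fv j g - Gv j g) := by
        rw [hjrec]; linarith
      have e2 : lam j * (2 - ε₀/lam j) = 2*lam j - ε₀ := by
        field_simp [(hlam j).ne']
      exact (mul_lt_mul_iff_right₀ (hlam j)).mp (by rw [e2]; exact hlow)
    have hδj : ∀ j, ε₀/lam j ≤ δ j := by
      intro j
      rw [div_le_iff₀ (hlam j)]
      calc ε₀ ≤ lam j * δ j := hε₀le j
        _ = δ j * lam j := mul_comm _ _
    have hFvg : ∀ j, 1 - δ j < Fv j g := by
      intro j
      have hB := abs_le.mp (happ _ (hGv j).1)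
      have hcij := hci j
      have hdj := hδj j
      linarith
    have hGvg : ∀ j, 1 - δ j < Gv j (-g) := by
      intro j
      rw [map_neg]
      have hA := abs_le.mp (happ _ (hFv j).1)
      have hcij := hci j
      have hdj := hδj j
      linarith
    choose x hx using fun j => key_lemma (f j) g (le_of_eq (hf j)) hg (Fv j) (hFv j).1
      (hα j).1 (hs0 j) (hs1 j) (hδ0 j) (h1 j) (h2 j) (hFv j).2 (hFvg j)
    choose y hy using fun j => key_lemma (f j) (-g) (le_of_eq (hf j))
      (by rw [norm_neg]; exact hg) (Gv j) (hGv j).1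
      (hα j).1 (hs0 j) (hs1 j) (hδ0 j) (h1 j) (h2 j) (hGv j).2 (hGvg j)
    have hxm : (∑ j, lam j • x j) ∈ ccomb lam (fun i => ballSlice (f i) (α i)) :=
      ⟨x, fun j => ⟨(hx j).1, (hx j).2.1⟩, rfl⟩
    have hym : (∑ j, lam j • y j) ∈ ccomb lam (fun i => ballSlice (f i) (α i)) :=
      ⟨y, fun j => ⟨(hy j).1, (hy j).2.1⟩, rfl⟩
    have hterm : ∀ j, 2 - 2*η < g (x j) - g (y j) := by
      intro j
      have hxg := (hx j).2.2
      have hyg := (hy j).2.2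
      rw [ContinuousLinearMap.neg_apply] at hyg
      linarith
    have hgdiff : 2 - 2*η < g ((∑ j, lam j • x j) - ∑ j, lam j • y j) := by
      have e1 : g ((∑ j, lam j • x j) - ∑ j, lam j • y j)
          = ∑ j, lam j * (g (x j) - g (y j)) := by
        rw [map_sub, map_sum, map_sum, ← Finset.sum_sub_distrib]
        exact Finset.sum_congr rfl (fun j _ => by rw [map_smul, map_smul]; simp [mul_sub])
      rw [e1]
      calc 2 - 2*η = ∑ j, lam j * (2 - 2*η) := by
            rw [← Finset.sum_mul, hsum, one_mul]
        _ < ∑ j, lam j * (g (x j) - g (y j)) :=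
            Finset.sum_lt_sum_of_nonempty Finset.univ_nonempty
              (fun j _ => mul_lt_mul_of_pos_left (hterm j) (hlam j))
    have hnorm : g ((∑ j, lam j • x j) - ∑ j, lam j • y j)
        ≤ ‖(∑ j, lam j • x j) - ∑ j, lam j • y j‖ := by
      set z := (∑ j, lam j • x j) - ∑ j, lam j • y j with hz
      calc g z ≤ |g z| := le_abs_self _
        _ = ‖g z‖ := (Real.norm_eq_abs _).symm
        _ ≤ ‖g‖ * ‖z‖ := g.le_opNorm z
        _ ≤ 1 * ‖z‖ := mul_le_mul_of_nonneg_right hg (norm_nonneg z)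
        _ = ‖z‖ := one_mul _
    have hSb : Bornology.IsBounded (ccomb lam (fun i => ballSlice (f i) (α i))) :=
      (Metric.isBounded_closedBall (x := (0:X)) (r := 1)).subset
        (ballcomb_subset (fun i => (hlam i).le) hsum f α)
    have hdist := Metric.dist_le_diam_of_mem hSb hxm hym
    rw [dist_eq_norm] at hdist
    linarith
end
end

section
/- Let (X, ‖·‖) be a Banach space and C ⊆ B_X an absolutely convex closed subset such that every convex combination of slices of C has ‖·‖-diameter 2. Then for every ε > 0 there is an equivalent norm |·| on X (whose unit ball is the closure of C + η B_X for suitable η > 0) such that every convex combination of slices of B_{(X,|·|)} has |·|-diameter at least 2 − ε. -/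
open scoped BigOperators Pointwise
open Metric

noncomputable section

/-- The slice of a bounded set `A ⊆ X` cut by the functional `φ` at depth `β`
below its supremum on `A` (i.e. the slice `S(A, φ, β)` for `φ` of norm one
with respect to the norm whose unit ball is `A`). -/
def supSlice {X : Type*} [NormedAddCommGroup X] [NormedSpace ℝ X]
    (A : Set X) (φ : StrongDual ℝ X) (β : ℝ) : Set X :=
  {x ∈ A | sSup ((fun y => φ y) '' A) - β < φ x}

theorem renorming_from_abs_convex_set_with_diam_two_ccombs
    (X : Type*) [NormedAddCommGroup X] [NormedSpace ℝ X] [CompleteSpace X]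
    (C : Set X) (hCball : C ⊆ closedBall 0 1) (hCclosed : IsClosed C)
    (hCconv : Convex ℝ C) (hCsym : C = -C)
    (hC : ∀ (n : ℕ) (lam : Fin n → ℝ), (∀ i, 0 < lam i) → ∑ i, lam i = 1 →
      ∀ (φ : Fin n → StrongDual ℝ X) (β : Fin n → ℝ), (∀ i, 0 < β i) →
      Metric.diam (ccomb lam (fun i => supSlice C (φ i) (β i))) = 2)
    (ε : ℝ) (hε : 0 < ε) :
    ∃ η > (0:ℝ), ∃ B : Set X,
      -- `B` is the unit ball of the equivalent norm `|·| = gauge B`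
      B = closure (C + η • closedBall (0:X) 1) ∧
      ∀ (n : ℕ) (lam : Fin n → ℝ), (∀ i, 0 < lam i) → ∑ i, lam i = 1 →
      ∀ (φ : Fin n → StrongDual ℝ X) (β : Fin n → ℝ), (∀ i, 0 < β i) →
      2 - ε ≤ sSup (Set.image2 (fun u v => gauge B (u - v))
        (ccomb lam (fun i => supSlice B (φ i) (β i)))
        (ccomb lam (fun i => supSlice B (φ i) (β i)))) := by
  have hη : (0:ℝ) < ε/4 := by linarith
  set η := ε/4 with hηdef
  set K := η • closedBall (0:X) 1 with hKdef
  set B := closure (C + K) with hBdef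
  -- C is nonempty
  have hCne : C.Nonempty := by
    by_contra h
    rw [Set.not_nonempty_iff_eq_empty] at h
    have h1 := hC 1 (fun _ => 1) (fun _ => one_pos) (by simp) (fun _ => 0) (fun _ => 1)
      (fun _ => one_pos)
    have h2 : ccomb (fun _ : Fin 1 => (1:ℝ)) (fun _ => supSlice C 0 1) = ∅ := by
      ext w
      simp only [Set.mem_empty_iff_false, iff_false, ccomb, Set.mem_setOf_eq]
      rintro ⟨f, hf, -⟩
      have := (hf 0).1
      rw [h] at this
      exact this
    rw [h2] at h1
    simp at h1
  -- 0 ∈ C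
  have h0C : (0:X) ∈ C := by
    obtain ⟨x, hx⟩ := hCne
    have hnx : -x ∈ C := by
      have hx' : x ∈ -C := by rw [← hCsym]; exact hx
      exact Set.mem_neg.mp hx'
    have := hCconv hx hnx (by norm_num : (0:ℝ) ≤ 1/2) (by norm_num : (0:ℝ) ≤ 1/2) (by norm_num)
    simpa using this
  -- K = closedBall 0 η
  have hKeq : K = closedBall (0:X) η := by
    rw [hKdef, _root_.smul_closedBall _ _ zero_le_one]
    simp [Real.norm_of_nonneg hη.le]
  -- C ⊆ B
  have hCB : C ⊆ B := by
    intro c hc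
    apply subset_closure
    have : c + 0 ∈ C + K := Set.add_mem_add hc (by rw [hKeq]; exact mem_closedBall_self hη.le)
    simpa using this
  -- closedBall 0 η ⊆ B
  have hballB : closedBall (0:X) η ⊆ B := by
    intro k hk
    apply subset_closure
    have : (0:X) + k ∈ C + K := Set.add_mem_add h0C (by rw [hKeq]; exact hk)
    simpa using this
  -- B ⊆ closedBall 0 (1+η)
  have hBsub : B ⊆ closedBall (0:X) (1+η) := by
    apply closure_minimal _ Metric.isClosed_closedBall
    rintro w ⟨c, hc, k, hk, rfl⟩
    rw [mem_closedBall_zero_iff]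
    have h1 : ‖c‖ ≤ 1 := mem_closedBall_zero_iff.mp (hCball hc)
    have h2 : ‖k‖ ≤ η := by rw [hKeq] at hk; exact mem_closedBall_zero_iff.mp hk
    calc ‖c + k‖ ≤ ‖c‖ + ‖k‖ := norm_add_le _ _
      _ ≤ 1 + η := add_le_add h1 h2
  have hBconv : Convex ℝ B := ((hCconv.add ((convex_closedBall _ _).smul η))).closure
  have hBabs : Absorbent ℝ B :=
    ((absorbent_ball_zero hη).mono (ball_subset_closedBall.trans hballB))
  -- gauge bounds
  have hgauge_le : ∀ w : X, gauge B w ≤ ‖w‖ / η := by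
    intro w
    rw [← gauge_closedBall hη.le w]
    exact gauge_mono ((absorbent_ball_zero hη).mono ball_subset_closedBall) hballB w
  have h1η : (0:ℝ) < 1 + η := by linarith
  have hnorm_le : ∀ w : X, ‖w‖ ≤ (1+η) * gauge B w := by
    intro w
    have := gauge_mono hBabs hBsub w
    rw [gauge_closedBall h1η.le] at this
    rw [div_le_iff₀ h1η] at this
    linarith
  refine ⟨η, hη, B, rfl, ?_⟩
  intro n lam hlam hsum φ β hβ
  by_cases hε2 : 2 ≤ ε
  · have : (0:ℝ) ≤ sSup (Set.image2 (fun u v => gauge B (u - v))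
        (ccomb lam (fun i => supSlice B (φ i) (β i)))
        (ccomb lam (fun i => supSlice B (φ i) (β i)))) := by
      apply Real.sSup_nonneg
      rintro t ⟨a, ha, b, hb, rfl⟩
      exact gauge_nonneg _
    linarith
  push_neg at hε2
  -- points of the combination of C-slices at distance > 2 - ε/2
  have hdiam := hC n lam hlam hsum φ (fun i => β i / 2) (fun i => half_pos (hβ i))
  have hex : ∃ u ∈ ccomb lam (fun i => supSlice C (φ i) (β i / 2)),
      ∃ v ∈ ccomb lam (fun i => supSlice C (φ i) (β i / 2)), 2 - ε/2 < dist u v := by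
    by_contra hcon
    push_neg at hcon
    have := Metric.diam_le_of_forall_dist_le (by linarith : (0:ℝ) ≤ 2 - ε/2)
      (fun a ha b hb => hcon a ha b hb)
    rw [hdiam] at this
    linarith
  obtain ⟨u, ⟨xf, hxf, hu⟩, v, ⟨yf, hyf, hv⟩, huv⟩ := hex
  -- choose z i ∈ K almost norming φ i
  have hz : ∀ i, ∃ zz ∈ K, η * ‖φ i‖ - β i / 2 < φ i zz := by
    intro i
    have hr : ‖φ i‖ - β i / (2*η) < ‖φ i‖ := by
      have h2η : (0:ℝ) < 2*η := by linarith
      have : 0 < β i / (2*η) := div_pos (hβ i) h2η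
      linarith
    obtain ⟨e, he1, he2⟩ := (φ i).exists_lt_apply_of_lt_opNorm hr
    set e' : X := if 0 ≤ φ i e then e else -e with he'def
    have he'mem : e' ∈ closedBall (0:X) 1 := by
      rw [mem_closedBall_zero_iff, he'def]
      split
      · linarith [he1]
      · rw [norm_neg]; linarith [he1]
    have he'val : φ i e' = |φ i e| := by
      rw [he'def]
      split <;> rename_i hsign
      · exact (abs_of_nonneg hsign).symm
      · rw [map_neg]
        exact (abs_of_neg (lt_of_not_ge hsign)).symm
    refine ⟨η • e', Set.smul_mem_smul_set he'mem, ?_⟩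
    rw [map_smul, smul_eq_mul, he'val]
    have habs : ‖φ i‖ - β i / (2*η) < |φ i e| := by
      rwa [Real.norm_eq_abs] at he2
    have := mul_lt_mul_of_pos_left habs hη
    have heq : η * (‖φ i‖ - β i / (2*η)) = η * ‖φ i‖ - β i / 2 := by
      field_simp
    linarith [heq ▸ this]
  choose z hzK hzφ using hz
  -- bound of sSup of φ i over B
  have hBne : B.Nonempty := hCne.mono hCB
  have hMC_bdd : ∀ i, ∀ c ∈ C, φ i c ≤ ‖φ i‖ := by
    intro i c hc
    have h1 : ‖c‖ ≤ 1 := mem_closedBall_zero_iff.mp (hCball hc)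
    calc φ i c ≤ |φ i c| := le_abs_self _
      _ = ‖φ i c‖ := (Real.norm_eq_abs _).symm
      _ ≤ ‖φ i‖ * ‖c‖ := (φ i).le_opNorm c
      _ ≤ ‖φ i‖ * 1 := by
          exact mul_le_mul_of_nonneg_left h1 (norm_nonneg _)
      _ = ‖φ i‖ := mul_one _
  have hMb : ∀ i, sSup ((fun y => φ i y) '' B) ≤ sSup ((fun y => φ i y) '' C) + η * ‖φ i‖ := by
    intro i
    apply csSup_le (hBne.image _)
    rintro t ⟨b, hb, rfl⟩
    have hD : IsClosed {w : X | φ i w ≤ sSup ((fun y => φ i y) '' C) + η * ‖φ i‖} :=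
      isClosed_le (φ i).continuous continuous_const
    have hsubD : C + K ⊆ {w : X | φ i w ≤ sSup ((fun y => φ i y) '' C) + η * ‖φ i‖} := by
      rintro w ⟨c, hc, k, hk, rfl⟩
      have h1 : φ i c ≤ sSup ((fun y => φ i y) '' C) :=
        le_csSup ⟨‖φ i‖, by rintro t ⟨c', hc', rfl⟩; exact hMC_bdd i c' hc'⟩
          (Set.mem_image_of_mem _ hc)
      have h2 : φ i k ≤ η * ‖φ i‖ := by
        rw [hKeq] at hk
        have hkn : ‖k‖ ≤ η := mem_closedBall_zero_iff.mp hk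
        calc φ i k ≤ |φ i k| := le_abs_self _
          _ = ‖φ i k‖ := (Real.norm_eq_abs _).symm
          _ ≤ ‖φ i‖ * ‖k‖ := (φ i).le_opNorm k
          _ ≤ ‖φ i‖ * η := mul_le_mul_of_nonneg_left hkn (norm_nonneg _)
          _ = η * ‖φ i‖ := mul_comm _ _
      simp only [Set.mem_setOf_eq, map_add]
      linarith
    have := closure_minimal hsubD hD hb
    exact this
  -- x i + z i and y i + z i belong to the B-slices
  have hmemslice : ∀ (f : Fin n → X), (∀ i, f i ∈ supSlice C (φ i) (β i / 2)) →
      ∀ i, f i + z i ∈ supSlice B (φ i) (β i) := by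
    intro f hf i
    constructor
    · exact subset_closure (Set.add_mem_add (hf i).1 (hzK i))
    · have h1 : sSup ((fun y => φ i y) '' C) - β i / 2 < φ i (f i) := (hf i).2
      have h2 := hzφ i
      have h3 := hMb i
      rw [map_add]
      linarith
  set u' : X := ∑ i, lam i • (xf i + z i) with hu'def
  set v' : X := ∑ i, lam i • (yf i + z i) with hv'def
  have hu' : u' ∈ ccomb lam (fun i => supSlice B (φ i) (β i)) :=
    ⟨fun i => xf i + z i, hmemslice xf hxf, rfl⟩
  have hv' : v' ∈ ccomb lam (fun i => supSlice B (φ i) (β i)) :=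
    ⟨fun i => yf i + z i, hmemslice yf hyf, rfl⟩
  have hdiff : u' - v' = u - v := by
    rw [hu, hv, hu'def, hv'def]
    simp only [smul_add, Finset.sum_add_distrib]
    abel
  -- the gauge of the difference is large
  have hgb : 2 - ε ≤ gauge B (u' - v') := by
    have h1 : ‖u' - v'‖ ≤ (1+η) * gauge B (u' - v') := hnorm_le _
    have h2 : 2 - ε/2 < ‖u' - v'‖ := by
      rw [hdiff, ← dist_eq_norm]
      exact huv
    have h3 : (2 - ε) * (1 + η) ≤ 2 - ε/2 := by
      rw [hηdef]
      nlinarith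
    nlinarith
  -- conclude via le_csSup
  have hccB : ∀ w ∈ ccomb lam (fun i => supSlice B (φ i) (β i)), w ∈ B := by
    rintro w ⟨f, hf, rfl⟩
    exact hBconv.sum_mem (fun i _ => (hlam i).le) hsum (fun i _ => (hf i).1)
  have hbdd : BddAbove (Set.image2 (fun u v => gauge B (u - v))
      (ccomb lam (fun i => supSlice B (φ i) (β i)))
      (ccomb lam (fun i => supSlice B (φ i) (β i)))) := by
    refine ⟨2 * (1+η) / η, ?_⟩
    rintro t ⟨a, ha, b, hb, rfl⟩
    have haB : ‖a‖ ≤ 1 + η := mem_closedBall_zero_iff.mp (hBsub (hccB a ha))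
    have hbB : ‖b‖ ≤ 1 + η := mem_closedBall_zero_iff.mp (hBsub (hccB b hb))
    have h1 : ‖a - b‖ ≤ 2 * (1+η) := by
      calc ‖a - b‖ ≤ ‖a‖ + ‖b‖ := norm_sub_le _ _
        _ ≤ 2 * (1+η) := by linarith
    calc gauge B (a - b) ≤ ‖a - b‖ / η := hgauge_le _
      _ ≤ 2 * (1+η) / η := by
          exact div_le_div_of_nonneg_right h1 hη.le |> fun h => h
  have hmem2 : gauge B (u' - v') ∈ Set.image2 (fun u v => gauge B (u - v))
      (ccomb lam (fun i => supSlice B (φ i) (β i)))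
      (ccomb lam (fun i => supSlice B (φ i) (β i))) :=
    Set.mem_image2_of_mem hu' hv'
  exact hgb.trans (le_csSup hbdd hmem2)
end
end
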